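/- Let Π ∈ ℝ^{R×J} and x ∈ ℝ^J with x_j ≥ 0 for all j, and suppose the columns { (Π_{1 j},…,Π_{R j}) : j with x_j > 0 } span ℝ^R. Let D = { b ∈ ℝ^R : Σ_{i=1}^{R} b_i Π_{i j} > 0 for every j = 1,…,J }. Then f_row(·, x, Π) is strictly convex on D. -/
import Mathlib


/-- The row-subproblem objective
`f_row(b, x, Π) = Σ_r b_r − Σ_j x_j · log(Σ_r b_r Π_{r j})`. -/
noncomputable def frow {R J : ℕ} (b : Fin R → ℝ) (x : Fin J → ℝ)
    (P : Matrix (Fin R) (Fin J) ℝ) : ℝ :=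
  ∑ r, b r - ∑ j, x j * Real.log (∑ r, b r * P r j)

/-- Auxiliary: the dot-product linear functional `v ↦ ∑ i, c i * v i`. -/
noncomputable def dotLM {R : ℕ} (c : Fin R → ℝ) : (Fin R → ℝ) →ₗ[ℝ] ℝ where
  toFun v := ∑ i, c i * v i
  map_add' u v := by simp [mul_add, Finset.sum_add_distrib]
  map_smul' a v := by simp [Finset.mul_sum, mul_left_comm]

/-- If `x ≥ 0` and the columns of `Π` corresponding to indices `j` with
`x_j > 0` span `ℝ^R`, then `f_row(·, x, Π)` is strictly convex on
`D = { b : Σ_i b_i Π_{i j} > 0 for all j }`. -/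
theorem frow_strictConvexOn
    (J R : ℕ) (P : Matrix (Fin R) (Fin J) ℝ)
    (x : Fin J → ℝ) (hx : ∀ j, 0 ≤ x j)
    (hspan : Submodule.span ℝ
      {v : Fin R → ℝ | ∃ j : Fin J, 0 < x j ∧ v = fun r => P r j} = ⊤) :
    StrictConvexOn ℝ {b : Fin R → ℝ | ∀ j : Fin J, 0 < ∑ i, b i * P i j}
      (fun b => frow b x P) := by
  have hcombo : ∀ (b b' : Fin R → ℝ) (t s : ℝ) (j : Fin J),
      ∑ i, (t • b + s • b') i * P i j
        = t * ∑ i, b i * P i j + s * ∑ i, b' i * P i j := by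
    intro b b' t s j
    simp [Finset.mul_sum, add_mul, mul_assoc, Finset.sum_add_distrib]
  constructor
  · intro b hb b' hb' t s ht hs hts
    intro j
    rw [hcombo]
    rcases ht.eq_or_lt with h | h
    · have hs1 : s = 1 := by linarith
      rw [← h, hs1]; simpa using hb' j
    · have h1 := mul_pos h (hb j)
      have h2 := mul_nonneg hs (hb' j).le
      linarith
  · intro b hb b' hb' hne t s ht hs hts
    simp only [Set.mem_setOf_eq] at hb hb'
    set A : Fin J → ℝ := fun j => ∑ i, b i * P i j with hA
    set B : Fin J → ℝ := fun j => ∑ i, b' i * P i j with hB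
    obtain ⟨j₀, hxj₀, hnej₀⟩ : ∃ j, 0 < x j ∧ A j ≠ B j := by
      by_contra h
      push_neg at h
      apply hne
      have hφ : dotLM b = dotLM b' := by
        apply LinearMap.ext_on hspan
        rintro v ⟨j, hj, rfl⟩
        exact h j hj
      funext r
      have := congrFun (congrArg DFunLike.coe hφ) (Pi.single r 1)
      simpa [dotLM, Pi.single_apply, mul_ite, Finset.sum_ite_eq'] using this
    have hlog : ∀ j, t * Real.log (A j) + s * Real.log (B j)
        ≤ Real.log (t * A j + s * B j) := by
      intro j
      have := strictConcaveOn_log_Ioi.concaveOn.2 (Set.mem_Ioi.2 (hb j))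
        (Set.mem_Ioi.2 (hb' j)) ht.le hs.le hts
      simpa [smul_eq_mul] using this
    have hlog₀ : t * Real.log (A j₀) + s * Real.log (B j₀)
        < Real.log (t * A j₀ + s * B j₀) := by
      have := strictConcaveOn_log_Ioi.2 (Set.mem_Ioi.2 (hb j₀))
        (Set.mem_Ioi.2 (hb' j₀)) hnej₀ ht hs hts
      simpa [smul_eq_mul] using this
    have main : ∑ j, x j * (t * Real.log (A j) + s * Real.log (B j))
        < ∑ j, x j * Real.log (t * A j + s * B j) := by
      apply Finset.sum_lt_sum
      · intro j _
        exact mul_le_mul_of_nonneg_left (hlog j) (hx j)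
      · exact ⟨j₀, Finset.mem_univ _, mul_lt_mul_of_pos_left hlog₀ hxj₀⟩
    have hdist : ∑ j, x j * (t * Real.log (A j) + s * Real.log (B j))
        = t * ∑ j, x j * Real.log (A j) + s * ∑ j, x j * Real.log (B j) := by
      rw [Finset.mul_sum, Finset.mul_sum, ← Finset.sum_add_distrib]
      exact Finset.sum_congr rfl fun j _ => by ring
    have hsum : ∑ r, (t • b + s • b') r = t * ∑ r, b r + s * ∑ r, b' r := by
      simp [Finset.mul_sum, Finset.sum_add_distrib]
    simp only [frow, smul_eq_mul]
    have hcomb' : ∑ j, x j * Real.log (∑ i, (t • b + s • b') i * P i j)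
        = ∑ j, x j * Real.log (t * A j + s * B j) := by
      exact Finset.sum_congr rfl fun j _ => by rw [hcombo]
    rw [hcomb', hsum]
    rw [hdist] at main
    linarith
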